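/- Let Y ∈ ℝ^{n×d}, x* ∈ ℝ^n, β > 0, and m ≥ 1. Then the weight-decay primal optimal value inf over u_1,…,u_m ∈ ℝ^d and v_1,…,v_m ∈ ℝ of (1/2)‖Σ_{j=1}^m (Y u_j)_+ v_j − x*‖_2² + (β/2) Σ_{j=1}^m (‖u_j‖_2² + |v_j|²) is equal to the rescaled optimal value inf over u_1,…,u_m ∈ ℝ^d with ‖u_j‖_2 ≤ 1 for all j and v_1,…,v_m ∈ ℝ of (1/2)‖Σ_{j=1}^m (Y u_j)_+ v_j − x*‖_2² + β Σ_{j=1}^m |v_j|. -/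

import Mathlib

open Matrix Finset

noncomputable section

/-- Euclidean (ℓ2) norm of a vector in ℝ^k. -/
def l2 {k : ℕ} (x : Fin k → ℝ) : ℝ := Real.sqrt (∑ i, (x i) ^ 2)

/-- Componentwise ReLU. -/
def relu {k : ℕ} (x : Fin k → ℝ) : Fin k → ℝ := fun i => max (x i) 0

/-- The set of ReLU sign-pattern matrices of `Y`: diagonal 0/1 matrices
`Diag(1_{Yu ≥ 0})` as `u` ranges over the closed unit ball. -/
def signPatterns {n d : ℕ} (Y : Matrix (Fin n) (Fin d) ℝ) :
    Set (Matrix (Fin n) (Fin n) ℝ) :=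
  { M | ∃ u : Fin d → ℝ, l2 u ≤ 1 ∧
      M = Matrix.diagonal (fun i => if 0 ≤ Y.mulVec u i then (1 : ℝ) else 0) }

/-- Primal (non-convex) training objective with `m` neurons. -/
def primalObj {n d : ℕ} (Y : Matrix (Fin n) (Fin d) ℝ) (xs : Fin n → ℝ) (β : ℝ)
    (m : ℕ) (u : Fin m → Fin d → ℝ) (v : Fin m → ℝ) : ℝ :=
  (1 / 2) * l2 ((∑ j, v j • relu (Y.mulVec (u j))) - xs) ^ 2
    + (β / 2) * ∑ j, (l2 (u j) ^ 2 + |v j| ^ 2)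

/-- Optimal value of the primal training problem with `m` neurons. -/
def pStar {n d : ℕ} (Y : Matrix (Fin n) (Fin d) ℝ) (xs : Fin n → ℝ) (β : ℝ)
    (m : ℕ) : ℝ :=
  sInf { c | ∃ u : Fin m → Fin d → ℝ, ∃ v : Fin m → ℝ, c = primalObj Y xs β m u v }

/-- Dual feasibility: `(2 Dᵢ − I) Y wᵢ ≥ 0` componentwise for every `i`. -/
def dualFeasible {n d ℓ : ℕ} (Y : Matrix (Fin n) (Fin d) ℝ)
    (D : Fin ℓ → Matrix (Fin n) (Fin n) ℝ) (w : Fin ℓ → Fin d → ℝ) : Prop :=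
  ∀ i j, 0 ≤ ((2 • D i - 1).mulVec (Y.mulVec (w i))) j

/-- Convex dual objective. -/
def dualObj {n d ℓ : ℕ} (Y : Matrix (Fin n) (Fin d) ℝ) (xs : Fin n → ℝ) (β : ℝ)
    (D : Fin ℓ → Matrix (Fin n) (Fin n) ℝ) (w z : Fin ℓ → Fin d → ℝ) : ℝ :=
  (1 / 2) * l2 ((∑ i, (D i).mulVec (Y.mulVec (w i - z i))) - xs) ^ 2
    + β * ∑ i, (l2 (w i) + l2 (z i))

/-- Optimal value of the convex dual program. -/
def dStar {n d ℓ : ℕ} (Y : Matrix (Fin n) (Fin d) ℝ) (xs : Fin n → ℝ) (β : ℝ)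
    (D : Fin ℓ → Matrix (Fin n) (Fin n) ℝ) : ℝ :=
  sInf { c | ∃ w z : Fin ℓ → Fin d → ℝ,
    dualFeasible Y D w ∧ dualFeasible Y D z ∧ c = dualObj Y xs β D w z }

end

section Aux

lemma l2_nonneg {k : ℕ} (x : Fin k → ℝ) : 0 ≤ l2 x := Real.sqrt_nonneg _

lemma l2_zero {k : ℕ} : l2 (0 : Fin k → ℝ) = 0 := by simp [l2]

lemma l2_eq_zero {k : ℕ} {x : Fin k → ℝ} (h : l2 x = 0) : x = 0 := by
  have hs : (∑ i, (x i) ^ 2) = 0 := by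
    have := Real.sqrt_eq_zero (Finset.sum_nonneg fun i _ => sq_nonneg (x i)) |>.mp h
    exact this
  funext i
  have := (Finset.sum_eq_zero_iff_of_nonneg (fun i _ => sq_nonneg (x i))).mp hs i (by simp)
  exact pow_eq_zero_iff (n := 2) (by norm_num) |>.mp this

lemma l2_smul {k : ℕ} (c : ℝ) (x : Fin k → ℝ) (hc : 0 ≤ c) :
    l2 (c • x) = c * l2 x := by
  unfold l2
  have : (∑ i, ((c • x) i) ^ 2) = c ^ 2 * ∑ i, (x i) ^ 2 := by
    rw [Finset.mul_sum]
    refine Finset.sum_congr rfl fun i _ => ?_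
    simp [Pi.smul_apply, smul_eq_mul, mul_pow]
  rw [this, Real.sqrt_mul (sq_nonneg c), Real.sqrt_sq hc]

lemma relu_smul {k : ℕ} (c : ℝ) (x : Fin k → ℝ) (hc : 0 ≤ c) :
    relu (c • x) = c • relu x := by
  funext i
  simp only [relu, Pi.smul_apply, smul_eq_mul]
  rw [mul_max_of_nonneg _ _ hc, mul_zero]

lemma relu_zero {k : ℕ} : relu (0 : Fin k → ℝ) = 0 := by
  funext i; simp [relu]

/-- Per-neuron rescaling: from constrained form to weight-decay form. -/
lemma neuronA {n d : ℕ} (Y : Matrix (Fin n) (Fin d) ℝ) (β : ℝ) (hβ : 0 < β)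
    (u : Fin d → ℝ) (v : ℝ) (hu : l2 u ≤ 1) :
    ∃ u' : Fin d → ℝ, ∃ v' : ℝ,
      v' • relu (Y.mulVec u') = v • relu (Y.mulVec u) ∧
      β / 2 * (l2 u' ^ 2 + |v'| ^ 2) ≤ β * |v| := by
  by_cases h : l2 u = 0
  · have hu0 : u = 0 := l2_eq_zero h
    refine ⟨0, 0, ?_, ?_⟩
    · subst hu0; simp [relu_zero]
    · simp [l2_zero]; positivity
  by_cases hv : v = 0
  · refine ⟨0, 0, ?_, ?_⟩
    · subst hv; simp
    · simp [l2_zero, hv]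
  · have hpos : 0 < l2 u := lt_of_le_of_ne (l2_nonneg u) (Ne.symm h)
    have hvpos : 0 < |v| := abs_pos.mpr hv
    set t := Real.sqrt (|v| / l2 u) with ht
    have htpos : 0 < t := Real.sqrt_pos.mpr (div_pos hvpos hpos)
    have ht2 : t ^ 2 = |v| / l2 u := Real.sq_sqrt (le_of_lt (div_pos hvpos hpos))
    refine ⟨t • u, v / t, ?_, ?_⟩
    · rw [Matrix.mulVec_smul, relu_smul _ _ htpos.le, smul_smul,
        div_mul_cancel₀ _ (ne_of_gt htpos)]
    · have h1 : l2 (t • u) ^ 2 = |v| * l2 u := by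
        rw [l2_smul _ _ htpos.le, mul_pow, ht2]
        field_simp
      have h2 : |v / t| ^ 2 = |v| * l2 u := by
        rw [sq_abs, div_pow, ht2, ← sq_abs v]
        field_simp
      rw [h1, h2]
      have hkey := mul_le_mul_of_nonneg_left hu (mul_nonneg hβ.le hvpos.le)
      nlinarith [hkey]

/-- Per-neuron rescaling: from weight-decay form to constrained form. -/
lemma neuronB {n d : ℕ} (Y : Matrix (Fin n) (Fin d) ℝ) (β : ℝ) (hβ : 0 < β)
    (u : Fin d → ℝ) (v : ℝ) :
    ∃ u' : Fin d → ℝ, ∃ v' : ℝ, l2 u' ≤ 1 ∧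
      v' • relu (Y.mulVec u') = v • relu (Y.mulVec u) ∧
      β * |v'| ≤ β / 2 * (l2 u ^ 2 + |v| ^ 2) := by
  by_cases h : l2 u = 0
  · have hu0 : u = 0 := l2_eq_zero h
    refine ⟨0, 0, by simp [l2_zero], ?_, ?_⟩
    · subst hu0; simp [relu_zero]
    · simp; positivity
  · have hpos : 0 < l2 u := lt_of_le_of_ne (l2_nonneg u) (Ne.symm h)
    refine ⟨(l2 u)⁻¹ • u, l2 u * v, ?_, ?_, ?_⟩
    · rw [l2_smul _ _ (inv_nonneg.mpr hpos.le), inv_mul_cancel₀ h]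
    · rw [Matrix.mulVec_smul, relu_smul _ _ (inv_nonneg.mpr hpos.le), smul_smul,
        mul_comm (l2 u) v, mul_assoc, mul_inv_cancel₀ h, mul_one]
    · rw [abs_mul, abs_of_nonneg hpos.le]
      nlinarith [sq_nonneg (l2 u - |v|), abs_nonneg v, hpos.le]

lemma primalObj_nonneg {n d : ℕ} (Y : Matrix (Fin n) (Fin d) ℝ) (xs : Fin n → ℝ)
    (β : ℝ) (hβ : 0 ≤ β) (m : ℕ) (u : Fin m → Fin d → ℝ) (v : Fin m → ℝ) :
    0 ≤ primalObj Y xs β m u v := by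
  unfold primalObj
  have h1 : (0:ℝ) ≤ (1 / 2) * l2 ((∑ j, v j • relu (Y.mulVec (u j))) - xs) ^ 2 := by
    positivity
  have h2 : (0:ℝ) ≤ (β / 2) * ∑ j, (l2 (u j) ^ 2 + |v j| ^ 2) := by
    apply mul_nonneg (by linarith)
    exact Finset.sum_nonneg fun j _ => add_nonneg (sq_nonneg _) (sq_nonneg _)
  linarith

end Aux

/-- **Rescaling equivalence.** Weight decay on both layers is
equivalent to constraining first-layer weights to the unit ball and penalizing
the ℓ1 norm of the second-layer weights. -/
theorem rescaling_equivalence {n d : ℕ} (Y : Matrix (Fin n) (Fin d) ℝ)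
    (xs : Fin n → ℝ) (β : ℝ) (hβ : 0 < β) (m : ℕ) (hm : 1 ≤ m) :
    pStar Y xs β m =
      sInf { c | ∃ u : Fin m → Fin d → ℝ, ∃ v : Fin m → ℝ,
        (∀ j, l2 (u j) ≤ 1) ∧
        c = (1 / 2) * l2 ((∑ j, v j • relu (Y.mulVec (u j))) - xs) ^ 2
            + β * ∑ j, |v j| } := by
  set B := { c | ∃ u : Fin m → Fin d → ℝ, ∃ v : Fin m → ℝ,
        (∀ j, l2 (u j) ≤ 1) ∧
        c = (1 / 2) * l2 ((∑ j, v j • relu (Y.mulVec (u j))) - xs) ^ 2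
            + β * ∑ j, |v j| } with hB
  set A := { c | ∃ u : Fin m → Fin d → ℝ, ∃ v : Fin m → ℝ,
        c = primalObj Y xs β m u v } with hA
  have hAbdd : BddBelow A := by
    refine ⟨0, ?_⟩
    rintro c ⟨u, v, rfl⟩
    exact primalObj_nonneg Y xs β hβ.le m u v
  have hBbdd : BddBelow B := by
    refine ⟨0, ?_⟩
    rintro c ⟨u, v, _, rfl⟩
    have h1 : (0:ℝ) ≤ (1 / 2) * l2 ((∑ j, v j • relu (Y.mulVec (u j))) - xs) ^ 2 := by
      positivity
    have h2 : (0:ℝ) ≤ β * ∑ j, |v j| :=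
      mul_nonneg hβ.le (Finset.sum_nonneg fun j _ => abs_nonneg _)
    linarith
  have hAne : A.Nonempty := ⟨_, 0, 0, rfl⟩
  have hBne : B.Nonempty := ⟨_, 0, 0, fun j => by simp [l2_zero], rfl⟩
  show sInf A = sInf B
  apply le_antisymm
  · apply le_csInf hBne
    rintro c ⟨u, v, hu, rfl⟩
    choose u' v' hout hpen using fun j => neuronA Y β hβ (u j) (v j) (hu j)
    have hmem : primalObj Y xs β m u' v' ∈ A := ⟨u', v', rfl⟩
    refine le_trans (csInf_le hAbdd hmem) ?_
    unfold primalObj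
    have hsum : (∑ j, v' j • relu (Y.mulVec (u' j)))
        = ∑ j, v j • relu (Y.mulVec (u j)) :=
      Finset.sum_congr rfl fun j _ => hout j
    rw [hsum]
    have hp : (β / 2) * ∑ j, (l2 (u' j) ^ 2 + |v' j| ^ 2) ≤ β * ∑ j, |v j| := by
      rw [Finset.mul_sum, Finset.mul_sum]
      exact Finset.sum_le_sum fun j _ => hpen j
    linarith
  · apply le_csInf hAne
    rintro c ⟨u, v, rfl⟩
    choose u' v' hle hout hpen using fun j => neuronB Y β hβ (u j) (v j)
    have hmem : ((1 / 2) * l2 ((∑ j, v' j • relu (Y.mulVec (u' j))) - xs) ^ 2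
        + β * ∑ j, |v' j|) ∈ B := ⟨u', v', hle, rfl⟩
    refine le_trans (csInf_le hBbdd hmem) ?_
    unfold primalObj
    have hsum : (∑ j, v' j • relu (Y.mulVec (u' j)))
        = ∑ j, v j • relu (Y.mulVec (u j)) :=
      Finset.sum_congr rfl fun j _ => hout j
    rw [hsum]
    have hp : β * ∑ j, |v' j| ≤ (β / 2) * ∑ j, (l2 (u j) ^ 2 + |v j| ^ 2) := by
      rw [Finset.mul_sum, Finset.mul_sum]
      exact Finset.sum_le_sum fun j _ => hpen j
    linarith
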